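/- Let k be a field of characteristic p > 0, let H be a subgroup of the automorphism group of projective n-space over k (i.e. PGL(n+1, k)) such that H is generated by elements whose orders are powers of p. If two points P₁ ≠ P₂ of ℙⁿ(k) are fixed by every element of H, then every point of the projective line through P₁ and P₂ is fixed by every element of H. -/
import Mathlib

lemma pow_eigen_aux {m : ℕ} {k : Type*} [Field k] (A : Matrix (Fin m) (Fin m) k)
    (v : Fin m → k) (c : k) (h : A.mulVec v = c • v) (N : ℕ) :
    (A ^ N).mulVec v = c ^ N • v := by
  induction N with
  | zero => simp [Matrix.one_mulVec]
  | succ N ih =>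
    rw [pow_succ, ← Matrix.mulVec_mulVec, h, Matrix.mulVec_smul, ih, pow_succ', smul_smul]

/-- If `H ≤ PGL(n+1,k)` (char p) is generated by elements whose orders are
powers of `p` and fixes two distinct points `P₁ ≠ P₂` of `ℙⁿ(k)`, then every point of the
projective line through `P₁` and `P₂` is fixed by every element of `H`.
Elements of PGL are represented by elements of GL; "order a power of p in PGL" means a
power `p^r` of the matrix is scalar; a point is fixed iff a (hence any) representing
vector is mapped to a nonzero scalar multiple of itself. -/
theorem stmt0 (p : ℕ) [Fact p.Prime] (k : Type*) [Field k] [CharP k p] (n : ℕ)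
    (H : Subgroup (Matrix.GeneralLinearGroup (Fin (n + 1)) k))
    (S : Set (Matrix.GeneralLinearGroup (Fin (n + 1)) k))
    (hgen : H = Subgroup.closure S)
    (hord : ∀ s ∈ S, ∃ (r : ℕ) (μ : kˣ),
      (s : Matrix (Fin (n + 1)) (Fin (n + 1)) k) ^ (p ^ r) = (μ : k) • (1 : Matrix (Fin (n + 1)) (Fin (n + 1)) k))
    (P₁ P₂ : Projectivization k (Fin (n + 1) → k)) (hne : P₁ ≠ P₂)
    (hfix₁ : ∀ h ∈ H, ∃ c : kˣ,
      Matrix.mulVec (h : Matrix (Fin (n + 1)) (Fin (n + 1)) k) P₁.rep = (c : k) • P₁.rep)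
    (hfix₂ : ∀ h ∈ H, ∃ c : kˣ,
      Matrix.mulVec (h : Matrix (Fin (n + 1)) (Fin (n + 1)) k) P₂.rep = (c : k) • P₂.rep) :
    ∀ h ∈ H, ∀ a b : k, a • P₁.rep + b • P₂.rep ≠ 0 →
      ∃ c : kˣ, Matrix.mulVec (h : Matrix (Fin (n + 1)) (Fin (n + 1)) k)
          (a • P₁.rep + b • P₂.rep) = (c : k) • (a • P₁.rep + b • P₂.rep) := by
  set v₁ := P₁.rep with hv₁
  set v₂ := P₂.rep with hv₂
  have hv₁ne : v₁ ≠ 0 := P₁.rep_nonzero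
  have hv₂ne : v₂ ≠ 0 := P₂.rep_nonzero
  -- eigenvalue uniqueness
  have uniq : ∀ (v : Fin (n+1) → k), v ≠ 0 → ∀ c c' : k, c • v = c' • v → c = c' := by
    intro v hv c c' hcc
    have : (c - c') • v = 0 := by rw [sub_smul, hcc, sub_self]
    rcases smul_eq_zero.mp this with h | h
    · exact sub_eq_zero.mp h
    · exact absurd h hv
  -- key claim: a common eigenvalue on both points
  have key : ∀ h ∈ H, ∃ c : kˣ,
      Matrix.mulVec (h : Matrix (Fin (n + 1)) (Fin (n + 1)) k) v₁ = (c : k) • v₁ ∧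
      Matrix.mulVec (h : Matrix (Fin (n + 1)) (Fin (n + 1)) k) v₂ = (c : k) • v₂ := by
    intro h hh
    rw [hgen] at hh
    induction hh using Subgroup.closure_induction with
    | mem s hs =>
      have hsH : s ∈ H := by rw [hgen]; exact Subgroup.subset_closure hs
      obtain ⟨c₁, hc₁⟩ := hfix₁ s hsH
      obtain ⟨c₂, hc₂⟩ := hfix₂ s hsH
      obtain ⟨r, μ, hμ⟩ := hord s hs
      have e₁ : (c₁ : k) ^ (p ^ r) = (μ : k) := by
        have h1 := pow_eigen_aux _ _ _ hc₁ (p ^ r)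
        rw [hμ, Matrix.smul_mulVec, Matrix.one_mulVec] at h1
        exact (uniq v₁ hv₁ne _ _ h1).symm
      have e₂ : (c₂ : k) ^ (p ^ r) = (μ : k) := by
        have h2 := pow_eigen_aux _ _ _ hc₂ (p ^ r)
        rw [hμ, Matrix.smul_mulVec, Matrix.one_mulVec] at h2
        exact (uniq v₂ hv₂ne _ _ h2).symm
      have hc : (c₁ : k) = (c₂ : k) := by
        have : ((c₁ : k) - (c₂ : k)) ^ (p ^ r) = 0 := by
          rw [sub_pow_char_pow, e₁, e₂, sub_self]
        have := pow_eq_zero_iff (pow_ne_zero r (Fact.out (p := p.Prime)).ne_zero) |>.mp this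
        exact sub_eq_zero.mp this
      exact ⟨c₁, hc₁, by rw [hc]; exact hc₂⟩
    | one => exact ⟨1, by simp [Matrix.one_mulVec], by simp [Matrix.one_mulVec]⟩
    | mul x y hx hy ihx ihy =>
      obtain ⟨cx, hx₁, hx₂⟩ := ihx
      obtain ⟨cy, hy₁, hy₂⟩ := ihy
      refine ⟨cx * cy, ?_, ?_⟩ <;>
        simp only [Units.val_mul, ← Matrix.mulVec_mulVec, hx₁, hx₂, hy₁, hy₂,
          Matrix.mulVec_smul, smul_smul]
      · rw [mul_comm]
      · rw [mul_comm]
    | inv x hx ihx =>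
      obtain ⟨cx, hx₁, hx₂⟩ := ihx
      have hinv : ((x⁻¹ : Matrix.GeneralLinearGroup (Fin (n+1)) k) : Matrix (Fin (n+1)) (Fin (n+1)) k) *
          (x : Matrix (Fin (n+1)) (Fin (n+1)) k) = 1 := by
        rw [← Units.val_mul, inv_mul_cancel, Units.val_one]
      refine ⟨cx⁻¹, ?_, ?_⟩
      · have : Matrix.mulVec (↑x⁻¹ : Matrix (Fin (n+1)) (Fin (n+1)) k) ((cx : k) • v₁) = v₁ := by
          rw [← hx₁, Matrix.mulVec_mulVec, hinv, Matrix.one_mulVec]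
        rw [Matrix.mulVec_smul] at this
        rw [Units.val_inv_eq_inv_val, eq_comm, inv_smul_eq_iff₀ (Units.ne_zero cx), this]
      · have : Matrix.mulVec (↑x⁻¹ : Matrix (Fin (n+1)) (Fin (n+1)) k) ((cx : k) • v₂) = v₂ := by
          rw [← hx₂, Matrix.mulVec_mulVec, hinv, Matrix.one_mulVec]
        rw [Matrix.mulVec_smul] at this
        rw [Units.val_inv_eq_inv_val, eq_comm, inv_smul_eq_iff₀ (Units.ne_zero cx), this]
  intro h hh a b _
  obtain ⟨c, hc₁, hc₂⟩ := key h hh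
  refine ⟨c, ?_⟩
  rw [Matrix.mulVec_add, Matrix.mulVec_smul, Matrix.mulVec_smul, hc₁, hc₂,
    smul_add, smul_smul, smul_smul, smul_smul, smul_smul, mul_comm a, mul_comm b]
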